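/- For positive integers l and k with l ≥ 2, let ω be uniform on {-1,1}^{[k]×[l]}, and for j ∈ [k] let Y_j be the indicator of the event that tribe j is pivotal (i.e. exactly one i ∈ [l] has ω(j,i) = −1). Then for every j ∈ [k], ℙ[Y_j = 1 and Tribes(l,k)(ω) = 1] ≤ ℙ[Y_j = 1] · ℙ[Tribes(l,k)(ω) = 1]. -/

import Mathlib

open Finset Filter

attribute [local instance] Classical.propDecidable

/-- The discrete hypercube indexed by `ι`: `true` encodes `+1`, `false` encodes `-1`
(so the pointwise `Bool` order, with `false < true`, is the coordinatewise partial
order on `{-1,1}^ι` with `-1 < 1`). -/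
abbrev Cube (ι : Type) := ι → Bool

/-- `ω` with its `i`-th coordinate flipped. -/
def flipAt {ι : Type} [DecidableEq ι] (ω : Cube ι) (i : ι) : Cube ι :=
  fun j => if j = i then !ω j else ω j

/-- The pivotal set `𝒫(f, ω)`: coordinates whose flip changes the value of `f`. -/
noncomputable def pivSet {ι : Type} [DecidableEq ι] [Fintype ι] {β : Type}
    (f : Cube ι → β) (ω : Cube ι) : Finset ι :=
  Finset.univ.filter fun i => f (flipAt ω i) ≠ f ω

/-- Probability of the event `p` under the uniform measure on the hypercube. -/
noncomputable def unifProb {ι : Type} [DecidableEq ι] [Fintype ι] (p : Cube ι → Prop) : ℝ :=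
  ((Finset.univ.filter p).card : ℝ) / (Fintype.card (Cube ι) : ℝ)

/-- Expectation of `X` under the uniform measure on the hypercube. -/
noncomputable def unifExp {ι : Type} [DecidableEq ι] [Fintype ι] (X : Cube ι → ℝ) : ℝ :=
  (∑ ω : Cube ι, X ω) / (Fintype.card (Cube ι) : ℝ)

/-- Conditional expectation of `X` given the event `A`, under the uniform measure. -/
noncomputable def condExpect {ι : Type} [DecidableEq ι] [Fintype ι]
    (X : Cube ι → ℝ) (A : Cube ι → Prop) : ℝ :=
  (∑ ω ∈ Finset.univ.filter A, X ω) / ((Finset.univ.filter A).card : ℝ)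

/-- `Tribes(l,k)` as a `{0,1}`-valued integer function on `{-1,1}^{[k]×[l]}`:
value `1` iff some tribe `t ∈ [k]` has all of its `l` bits equal to `+1` (`true`). -/
noncomputable def tribes (k l : ℕ) (ω : Cube (Fin k × Fin l)) : ℤ :=
  if ∃ t : Fin k, ∀ i : Fin l, ω (t, i) = true then 1 else 0

/-- Coordinatewise negation `-ω`. -/
def negCube {ι : Type} (ω : Cube ι) : Cube ι := fun x => !ω x

/-- The number of pivotal tribes: tribes having exactly one `-1` (`false`) bit. -/
noncomputable def pivTribeCount (k l : ℕ) (ω : Cube (Fin k × Fin l)) : ℕ :=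
  (Finset.univ.filter fun t : Fin k => ∃! i : Fin l, ω (t, i) = false).card

/-- Single-coordinate weight of the `ε`-noise joint distribution `ν_ε`. -/
noncomputable def noiseWeight (ε : ℝ) (b b' : Bool) : ℝ :=
  if b = b' then (1 - ε / 2) / 2 else ε / 4

/-- Probability of the event `E` under the `ε`-noise joint distribution `ν_ε`
(the product over coordinates of the single-coordinate weights). -/
noncomputable def noiseProb {ι : Type} [DecidableEq ι] [Fintype ι] (ε : ℝ)
    (E : Cube ι → Cube ι → Prop) : ℝ :=
  ∑ ω : Cube ι, ∑ ω' : Cube ι,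
    if E ω ω' then ∏ i : ι, noiseWeight ε (ω i) (ω' i) else 0

/-- `f` is transitive: it is invariant under some subgroup of permutations of the
coordinate set acting transitively, where `(σ · ω) x = ω (σ⁻¹ x)`. -/
def TransitiveInvariant {ι : Type} {β : Type} (f : Cube ι → β) : Prop :=
  ∃ G : Subgroup (Equiv.Perm ι),
    (∀ x y : ι, ∃ σ ∈ G, σ x = y) ∧
    ∀ σ ∈ G, ∀ ω : Cube ι, f (fun x => ω (σ⁻¹ x)) = f ω


/-- Split a cube along a predicate on coordinates. -/
def splitEquiv {α : Type} (p : α → Prop) [DecidablePred p] :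
    Cube α ≃ Cube {x // p x} × Cube {x // ¬ p x} where
  toFun ω := (fun s => ω s.1, fun s => ω s.1)
  invFun z x := if h : p x then z.1 ⟨x, h⟩ else z.2 ⟨x, h⟩
  left_inv ω := by funext x; by_cases h : p x <;> simp [h]
  right_inv z := by
    cases z with
    | mk a b =>
      refine Prod.ext ?_ ?_ <;> funext s
      · simp [s.2]
      · simp [s.2]

lemma card_filter_eq_nat_card {α : Type} [Fintype α] (p : α → Prop) [DecidablePred p] :
    (Finset.univ.filter p).card = Nat.card {x // p x} := by
  rw [Nat.card_eq_fintype_card, Fintype.card_subtype]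

lemma unifProb_split {ι δ₁ δ₂ : Type} [DecidableEq ι] [Fintype ι]
    [Fintype δ₁] [Fintype δ₂] [Nonempty δ₁] [Nonempty δ₂]
    (e : Cube ι ≃ δ₁ × δ₂) (P : δ₁ → Prop) (Q : δ₂ → Prop) :
    unifProb (fun x : Cube ι => P (e x).1 ∧ Q (e x).2)
      = unifProb (fun x : Cube ι => P (e x).1) * unifProb (fun x : Cube ι => Q (e x).2) := by
  have hγ : Fintype.card (Cube ι) = Fintype.card δ₁ * Fintype.card δ₂ := by
    rw [Fintype.card_congr e, Fintype.card_prod]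
  have n1 : Nat.card {x : Cube ι // P (e x).1 ∧ Q (e x).2}
      = Nat.card {a // P a} * Nat.card {b // Q b} := by
    rw [← Nat.card_prod]
    exact Nat.card_congr ((e.subtypeEquiv fun x => Iff.rfl).trans Equiv.subtypeProdEquivProd)
  have n2 : Nat.card {x : Cube ι // P (e x).1}
      = Nat.card {a // P a} * Fintype.card δ₂ := by
    rw [← Nat.card_eq_fintype_card (α := δ₂), ← Nat.card_prod]
    refine Nat.card_congr (((e.subtypeEquiv (q := fun y => P y.1 ∧ True)
      (fun x => Iff.of_eq (and_true _).symm)).trans (Equiv.subtypeProdEquivProd (p := P) (q := fun _ => True))).trans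
      (Equiv.prodCongr (Equiv.refl _) (Equiv.subtypeUnivEquiv fun _ => trivial)))
  have n3 : Nat.card {x : Cube ι // Q (e x).2}
      = Fintype.card δ₁ * Nat.card {b // Q b} := by
    rw [← Nat.card_eq_fintype_card (α := δ₁), ← Nat.card_prod]
    refine Nat.card_congr (((e.subtypeEquiv (q := fun y => True ∧ Q y.2)
      (fun x => Iff.of_eq (true_and _).symm)).trans (Equiv.subtypeProdEquivProd (p := fun _ => True) (q := Q))).trans
      (Equiv.prodCongr (Equiv.subtypeUnivEquiv fun _ => trivial) (Equiv.refl _)))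
  unfold unifProb
  rw [card_filter_eq_nat_card, card_filter_eq_nat_card, card_filter_eq_nat_card,
    n1, n2, n3, hγ]
  have d1 : (0:ℝ) < Fintype.card δ₁ := by exact_mod_cast Fintype.card_pos
  have d2 : (0:ℝ) < Fintype.card δ₂ := by exact_mod_cast Fintype.card_pos
  push_cast
  field_simp
  all_goals ring

lemma unifProb_nonneg {ι : Type} [DecidableEq ι] [Fintype ι] (p : Cube ι → Prop) :
    0 ≤ unifProb p := by
  unfold unifProb; positivity

lemma unifProb_mono {ι : Type} [DecidableEq ι] [Fintype ι] {p q : Cube ι → Prop}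
    (h : ∀ x, p x → q x) : unifProb p ≤ unifProb q := by
  unfold unifProb
  have hc : (Finset.univ.filter p).card ≤ (Finset.univ.filter q).card :=
    Finset.card_le_card (Finset.monotone_filter_right _ (fun x _ => h x))
  gcongr <;> first | positivity | exact_mod_cast hc

lemma unifProb_congr {ι : Type} [DecidableEq ι] [Fintype ι] {p q : Cube ι → Prop}
    (h : ∀ x, p x ↔ q x) : unifProb p = unifProb q := by
  unfold unifProb
  rw [Finset.filter_congr (fun x _ => h x)]


/-- For `l ≥ 2` and `k ≥ 1`, for every tribe `j`, the event that tribe `j`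
is pivotal and the event `{Tribes(l,k)(ω) = 1}` are negatively correlated:
`ℙ[Y_j = 1 ∧ Tribes = 1] ≤ ℙ[Y_j = 1]·ℙ[Tribes = 1]`. -/
theorem stmt7 (l k : ℕ) (hl : 2 ≤ l) (hk : 0 < k) (j : Fin k) :
    unifProb (fun ω : Cube (Fin k × Fin l) =>
        (∃! i : Fin l, ω (j, i) = false) ∧ tribes k l ω = 1) ≤
      unifProb (fun ω : Cube (Fin k × Fin l) => ∃! i : Fin l, ω (j, i) = false) *
        unifProb (fun ω : Cube (Fin k × Fin l) => tribes k l ω = 1) := by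
  classical
  have htribes : ∀ ω : Cube (Fin k × Fin l),
      tribes k l ω = 1 ↔ ∃ t : Fin k, ∀ i : Fin l, ω (t, i) = true := by
    intro ω; unfold tribes; split_ifs with h <;> simp [h]
  let e := splitEquiv (fun x : Fin k × Fin l => x.1 = j)
  let P : Cube {x : Fin k × Fin l // x.1 = j} → Prop :=
    fun a => ∃! i : Fin l, a ⟨(j, i), rfl⟩ = false
  let Q : Cube {x : Fin k × Fin l // ¬ x.1 = j} → Prop :=
    fun b => ∃ t : Fin k, ∃ h : ¬ t = j, ∀ i : Fin l, b ⟨(t, i), h⟩ = true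
  have step1 : unifProb (fun ω : Cube (Fin k × Fin l) =>
        (∃! i : Fin l, ω (j, i) = false) ∧ tribes k l ω = 1)
      = unifProb (fun ω : Cube (Fin k × Fin l) => P (e ω).1 ∧ Q (e ω).2) := by
    apply unifProb_congr
    intro ω
    rw [htribes]
    show _ ↔ (∃! i : Fin l, ω (j, i) = false) ∧
      ∃ t : Fin k, ∃ _ : ¬ t = j, ∀ i : Fin l, ω (t, i) = true
    constructor
    · rintro ⟨hA, t, ht⟩
      refine ⟨hA, t, ?_, ht⟩
      rintro rfl
      obtain ⟨i, hi, -⟩ := hA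
      rw [ht i] at hi
      simp at hi
    · rintro ⟨hA, t, -, ht⟩
      exact ⟨hA, t, ht⟩
  rw [step1, unifProb_split e P Q]
  have hA : unifProb (fun ω : Cube (Fin k × Fin l) => P (e ω).1)
      = unifProb (fun ω : Cube (Fin k × Fin l) => ∃! i : Fin l, ω (j, i) = false) :=
    unifProb_congr (fun ω => Iff.rfl)
  rw [hA]
  refine mul_le_mul_of_nonneg_left ?_ (unifProb_nonneg _)
  apply unifProb_mono
  rintro ω hω
  obtain ⟨t, -, ht⟩ : ∃ t : Fin k, ∃ _ : ¬ t = j, ∀ i : Fin l, ω (t, i) = true := hω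
  rw [htribes]
  exact ⟨t, ht⟩
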